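/- Suppose a ≠ 0, b = 0 and 0 ≤ c ≤ 2a²/9. Then for every x lying in the closed interval with endpoints −1/a and 1/(2a) and for every y ∈ ℝ, one has A(x)P(y) − B(x)Q(y) ≥ 0; consequently M(x,y) ≥ 0 for all such (x,y). (Here −1/a is the non-trivial zero of F', F(−1/a) = 1/(6a²) is the boundary energy, 1/(2a) is the other solution of F(x) = 1/(6a²), and 2a²/9 = 2A(1/(2a))/(3B(1/(2a))).) -/

import Mathlib

open Set

/-- `F(x) = x²/2 + a·x³/3 + b·x⁴/4`. -/
noncomputable def Fq (a b : ℝ) : ℝ → ℝ := fun x => x ^ 2 / 2 + a * x ^ 3 / 3 + b * x ^ 4 / 4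

/-- `G(y) = y²/2 + c·y⁴/4`. -/
noncomputable def Gq (c : ℝ) : ℝ → ℝ := fun y => y ^ 2 / 2 + c * y ^ 4 / 4

/-- The function `M(x,y)` built from `F` and `G`. -/
noncomputable def Mfun (F G : ℝ → ℝ) (x y : ℝ) : ℝ :=
  (6 * F x * (deriv (deriv F) x) ^ 2 - 3 * (deriv F x) ^ 2 * deriv (deriv F) x
      - 2 * F x * deriv F x * deriv (deriv (deriv F)) x) * G y * (deriv G y) ^ 2
    + F x * (deriv F x) ^ 2 * deriv (deriv F) x
      * ((deriv G y) ^ 2 - 2 * G y * deriv (deriv G) y)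

/-- The function `M(x,y)` for the quartic Hamiltonian with parameters `a`, `b`, `c`. -/
noncomputable def Mq (a b c : ℝ) (x y : ℝ) : ℝ := Mfun (Fq a b) (Gq c) x y

/-- The polynomial `A(x)`. -/
def Apoly (a b x : ℝ) : ℝ :=
  10 * a ^ 2 - 9 * b + a * (30 * b + 4 * a ^ 2) * x + b * (36 * b + 16 * a ^ 2) * x ^ 2
    + 24 * a * b ^ 2 * x ^ 3 + 9 * b ^ 3 * x ^ 4

/-- The polynomial `B(x)`. -/
def Bpoly (a b x : ℝ) : ℝ :=
  (6 + 4 * a * x + 3 * b * x ^ 2) * (1 + a * x + b * x ^ 2) ^ 2 * (1 + 2 * a * x + 3 * b * x ^ 2)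

/-- The polynomial `P(y)`. -/
def Ppoly (c y : ℝ) : ℝ := (1 + c * y ^ 2) ^ 2 * (2 + c * y ^ 2)

/-- The polynomial `Q(y)`. -/
def Qpoly (c y : ℝ) : ℝ := c * (3 + c * y ^ 2)


lemma key_ineq (s u : ℝ) (hs1 : -1 ≤ s) (hs2 : s ≤ 1/2) (hu : 0 ≤ u) :
    2*(6+4*s)*(1+s)^2*(1+2*s)*(3+u) ≤ 9*(10+4*s)*(1+u)^2*(2+u) := by
  nlinarith [sq_nonneg (1+s), sq_nonneg u, sq_nonneg (s*u), mul_nonneg hu hu,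
    mul_nonneg (mul_nonneg hu hu) hu, sq_nonneg (1-2*s),
    mul_nonneg (add_nonneg (by linarith : (0:ℝ) ≤ 1+s) hu) hu,
    mul_nonneg (sub_nonneg.2 hs2) hu, sq_nonneg (u - s), sq_nonneg (1+2*s),
    mul_nonneg (sub_nonneg.2 hs2) (sq_nonneg (1+2*s)), sq_nonneg ((1-2*s)*(1+s))]

lemma main_ineq (a c s u : ℝ) (hs1 : -1 ≤ s) (hs2 : s ≤ 1/2) (hu : 0 ≤ u)
    (hc : 0 ≤ c) (hc2 : 9*c ≤ 2*a^2) :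
    c*((6+4*s)*(1+s)^2*(1+2*s))*(3+u) ≤ a^2*((10+4*s)*(1+u)^2*(2+u)) := by
  have hR : (0:ℝ) ≤ (10+4*s)*(1+u)^2*(2+u) := by
    apply mul_nonneg (mul_nonneg (by linarith) (sq_nonneg _)); linarith
  rcases le_or_gt ((6+4*s)*(1+s)^2*(1+2*s)) 0 with hW | hW
  · have h1 : c*((6+4*s)*(1+s)^2*(1+2*s))*(3+u) ≤ 0 := by
      have : c * ((6+4*s)*(1+s)^2*(1+2*s)) ≤ 0 := mul_nonpos_of_nonneg_of_nonpos hc hW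
      exact mul_nonpos_of_nonpos_of_nonneg this (by linarith)
    have h2 : (0:ℝ) ≤ a^2 * ((10+4*s)*(1+u)^2*(2+u)) := mul_nonneg (sq_nonneg a) hR
    linarith
  · have hk := key_ineq s u hs1 hs2 hu
    have h3u : (0:ℝ) ≤ 3 + u := by linarith
    -- c * W * (3+u) ≤ (2a²/9) * W * (3+u) ≤ a² * R
    have h1 : c*((6+4*s)*(1+s)^2*(1+2*s))*(3+u)
        ≤ (2*a^2/9)*((6+4*s)*(1+s)^2*(1+2*s))*(3+u) := by
      have : c ≤ 2*a^2/9 := by linarith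
      have := mul_le_mul_of_nonneg_right (mul_le_mul_of_nonneg_right this hW.le) h3u
      linarith
    have h2 : (2*a^2/9)*((6+4*s)*(1+s)^2*(1+2*s))*(3+u) ≤ a^2*((10+4*s)*(1+u)^2*(2+u)) := by
      have hA2 : (0:ℝ) ≤ a^2 := sq_nonneg a
      nlinarith [mul_le_mul_of_nonneg_left hk hA2]
    linarith

lemma dFq (a : ℝ) : deriv (Fq a 0) = fun x => x + a * x ^ 2 := by
  funext x
  have h : HasDerivAt (Fq a 0) (x + a * x ^ 2) x := by
    have h1 : HasDerivAt (fun x : ℝ => x ^ 2 / 2 + a * x ^ 3 / 3 + 0 * x ^ 4 / 4)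
        ((2 * x ^ 1) / 2 + a * (3 * x ^ 2) / 3 + 0 * (4 * x ^ 3) / 4) x := by
      exact (((hasDerivAt_pow 2 x).div_const 2).add
        (((hasDerivAt_pow 3 x).const_mul a).div_const 3)).add
        (((hasDerivAt_pow 4 x).const_mul 0).div_const 4)
    have : Fq a 0 = fun x : ℝ => x ^ 2 / 2 + a * x ^ 3 / 3 + 0 * x ^ 4 / 4 := rfl
    rw [this]
    convert h1 using 1; push_cast; ring
  exact h.deriv

lemma dFq2 (a : ℝ) : deriv (deriv (Fq a 0)) = fun x => 1 + 2 * a * x := by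
  rw [dFq]
  funext x
  have h : HasDerivAt (fun x : ℝ => x + a * x ^ 2) (1 + 2 * a * x) x := by
    have h1 := (hasDerivAt_id x).add (((hasDerivAt_pow 2 x).const_mul a))
    exact h1.congr_deriv (by push_cast; ring)
  exact h.deriv

lemma dFq3 (a : ℝ) : deriv (deriv (deriv (Fq a 0))) = fun _ => 2 * a := by
  rw [dFq2]
  funext x
  have h : HasDerivAt (fun x : ℝ => 1 + 2 * a * x) (2 * a) x := by
    have h1 := (hasDerivAt_const x (1:ℝ)).add ((hasDerivAt_id x).const_mul (2*a))
    exact h1.congr_deriv (by ring)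
  exact h.deriv

lemma dGq (c : ℝ) : deriv (Gq c) = fun y => y + c * y ^ 3 := by
  funext y
  have h : HasDerivAt (Gq c) (y + c * y ^ 3) y := by
    have h1 : HasDerivAt (fun y : ℝ => y ^ 2 / 2 + c * y ^ 4 / 4)
        ((2 * y ^ 1) / 2 + c * (4 * y ^ 3) / 4) y :=
      ((hasDerivAt_pow 2 y).div_const 2).add (((hasDerivAt_pow 4 y).const_mul c).div_const 4)
    have : Gq c = fun y : ℝ => y ^ 2 / 2 + c * y ^ 4 / 4 := rfl
    rw [this]
    convert h1 using 1; push_cast; ring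
  exact h.deriv

lemma dGq2 (c : ℝ) : deriv (deriv (Gq c)) = fun y => 1 + 3 * c * y ^ 2 := by
  rw [dGq]
  funext y
  have h : HasDerivAt (fun y : ℝ => y + c * y ^ 3) (1 + 3 * c * y ^ 2) y := by
    have h1 := (hasDerivAt_id y).add (((hasDerivAt_pow 3 y).const_mul c))
    exact h1.congr_deriv (by push_cast; ring)
  exact h.deriv

lemma Mq_eq (a c x y : ℝ) :
    Mq a 0 c x y = x ^ 4 * y ^ 4 / 24 * (Apoly a 0 x * Ppoly c y - Bpoly a 0 x * Qpoly c y) := by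
  unfold Mq Mfun
  rw [dFq3, dFq2, dFq, dGq2, dGq]
  simp only [Fq, Gq, Apoly, Bpoly, Ppoly, Qpoly]
  ring

theorem stmt6 (a c : ℝ) (ha : a ≠ 0) (hc0 : 0 ≤ c) (hc1 : c ≤ 2 * a ^ 2 / 9) :
    ∀ x ∈ Set.uIcc (-1 / a) (1 / (2 * a)), ∀ y : ℝ,
      0 ≤ Apoly a 0 x * Ppoly c y - Bpoly a 0 x * Qpoly c y ∧ 0 ≤ Mq a 0 c x y := by
  intro x hx y
  have e1 : a * (-1/a) = -1 := by field_simp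
  have e2 : a * (1/(2*a)) = 1/2 := by field_simp
  have hs : -1 ≤ a * x ∧ a * x ≤ 1/2 := by
    rcases Set.mem_uIcc.1 hx with ⟨h1, h2⟩ | ⟨h1, h2⟩ <;>
      rcases lt_or_gt_of_ne ha with hneg | hpos
    ·
      constructor
      · rw [← e1]; nlinarith
      · rw [← e2]; nlinarith
    · constructor
      · rw [← e1]; nlinarith
      · rw [← e2]; nlinarith
    · constructor
      · rw [← e1]; nlinarith
      · rw [← e2]; nlinarith
    · constructor
      · rw [← e1]; nlinarith
      · rw [← e2]; nlinarith
  have hu : 0 ≤ c * y ^ 2 := mul_nonneg hc0 (sq_nonneg y)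
  have hmain := main_ineq a c (a*x) (c*y^2) hs.1 hs.2 hu hc0 (by linarith)
  have hD : 0 ≤ Apoly a 0 x * Ppoly c y - Bpoly a 0 x * Qpoly c y := by
    have heq : Apoly a 0 x * Ppoly c y - Bpoly a 0 x * Qpoly c y
        = a^2*((10+4*(a*x))*(1+c*y^2)^2*(2+c*y^2))
          - c*((6+4*(a*x))*(1+(a*x))^2*(1+2*(a*x)))*(3+c*y^2) := by
      simp only [Apoly, Bpoly, Ppoly, Qpoly]; ring
    rw [heq]; linarith
  refine ⟨hD, ?_⟩
  rw [Mq_eq]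
  have : (0:ℝ) ≤ x ^ 4 * y ^ 4 / 24 := by positivity
  exact mul_nonneg this hD
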